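/- arXiv:1310.4576 — 2 statements merged into one kernel-verified Lean document; each statement's English description precedes it below -/
import Mathlib

section
/- For every n ≥ 1 and all real n×n matrices A and B, there exists t ∈ [0,1] such that det A − det B = cof(tA + (1−t)B) : (A − B), where cof M denotes the cofactor matrix of M and : the Frobenius inner product. -/
open Matrix

/-- The cofactor matrix of a square matrix: the transpose of its adjugate. -/
noncomputable def cof {n : ℕ} (A : Matrix (Fin n) (Fin n) ℝ) : Matrix (Fin n) (Fin n) ℝ :=
  (Matrix.adjugate A)ᵀ

/-- The Frobenius inner product of two square matrices. -/
def frobInner {n : ℕ} (A B : Matrix (Fin n) (Fin n) ℝ) : ℝ :=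
  ∑ i, ∑ j, A i j * B i j

/-- Derivative of `t ↦ det (M + t • C)`. -/
lemma hasDerivAt_det_aux {n : ℕ} (M C : Matrix (Fin n) (Fin n) ℝ) (t : ℝ) :
    HasDerivAt (fun s : ℝ => (M + s • C).det)
      (∑ c, ((M + t • C).updateCol c (fun k => C k c)).det) t := by
  set N := M + t • C with hN
  have hderiv : HasDerivAt (fun s : ℝ => (M + s • C).det)
      (∑ σ : Equiv.Perm (Fin n), (Equiv.Perm.sign σ : ℝ) *
        ∑ c, (∏ j ∈ Finset.univ.erase c, N (σ j) j) * C (σ c) c) t := by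
    simp only [Matrix.det_apply']
    apply HasDerivAt.fun_sum
    intro σ _
    apply HasDerivAt.const_mul
    have h : ∀ i : Fin n, HasDerivAt (fun s : ℝ => (M + s • C) (σ i) i)
        (C (σ i) i) t := by
      intro i
      simp only [Matrix.add_apply, Matrix.smul_apply, smul_eq_mul]
      simpa [mul_comm] using ((hasDerivAt_id t).const_mul (C (σ i) i)).const_add (M (σ i) i)
    have := HasDerivAt.fun_finset_prod (u := Finset.univ) (fun i _ => h i)
    simpa [hN, smul_eq_mul, mul_comm] using this
  convert hderiv using 1
  simp only [Matrix.det_apply']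
  rw [Finset.sum_comm]
  refine Finset.sum_congr rfl fun σ _ => ?_
  rw [Finset.mul_sum]
  refine Finset.sum_congr rfl fun c _ => ?_
  congr 1
  rw [← Finset.mul_prod_erase Finset.univ _ (Finset.mem_univ c)]
  rw [Matrix.updateCol_self, mul_comm]
  congr 1
  refine Finset.prod_congr rfl fun j hj => ?_
  rw [Matrix.updateCol_ne (Finset.mem_erase.mp hj).1]

/-- Sum of determinants with updated columns equals the Frobenius pairing with cofactors. -/
lemma sum_det_updateColumn {n : ℕ} (N C : Matrix (Fin n) (Fin n) ℝ) :
    ∑ c, (N.updateCol c (fun k => C k c)).det = frobInner (cof N) C := by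
  have h : ∀ c, (N.updateCol c (fun k => C k c)).det
      = ∑ k, N.adjugate c k * C k c := by
    intro c
    rw [← Matrix.cramer_apply, Matrix.cramer_eq_adjugate_mulVec]
    rfl
  simp only [h, frobInner, cof, Matrix.transpose_apply]
  rw [Finset.sum_comm]

theorem mean_value_det (n : ℕ) (hn : 1 ≤ n) (A B : Matrix (Fin n) (Fin n) ℝ) :
    ∃ t ∈ Set.Icc (0 : ℝ) 1,
      A.det - B.det = frobInner (cof (t • A + (1 - t) • B)) (A - B) := by
  have hd : ∀ s : ℝ, HasDerivAt (fun s : ℝ => (B + s • (A - B)).det)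
      (frobInner (cof (B + s • (A - B))) (A - B)) s := by
    intro s
    have := hasDerivAt_det_aux B (A - B) s
    rwa [sum_det_updateColumn] at this
  obtain ⟨c, hc, hceq⟩ := exists_hasDerivAt_eq_slope
    (fun s : ℝ => (B + s • (A - B)).det)
    (fun s : ℝ => frobInner (cof (B + s • (A - B))) (A - B)) one_pos
    (fun x _ => (hd x).continuousAt.continuousWithinAt) (fun x _ => hd x)
  refine ⟨c, ⟨hc.1.le, hc.2.le⟩, ?_⟩
  have h1 : B + (1 : ℝ) • (A - B) = A := by module
  have h0 : B + (0 : ℝ) • (A - B) = B := by module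
  have hM : B + c • (A - B) = c • A + (1 - c) • B := by module
  simp only [hM, h1, h0, sub_zero, div_one] at hceq
  exact hceq.symm
end

section
/- Let A be a real symmetric n×n matrix (n ≥ 1) and let 0 < m′ ≤ M′ be such that every eigenvalue λ of A satisfies m′ ≤ λ ≤ M′. Then for every vector z ∈ ℝⁿ, ((m′)ⁿ/M′) ‖z‖² ≤ zᵀ (cof A) z ≤ ((M′)ⁿ/m′) ‖z‖², where cof A denotes the cofactor matrix of A and ‖·‖ the Euclidean norm. -/
open Matrix

theorem cof_quadratic_form_bounds (n : ℕ) (hn : 1 ≤ n)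
    (A : Matrix (Fin n) (Fin n) ℝ) (hA : A.IsHermitian)
    (m' M' : ℝ) (hm' : 0 < m') (hmM : m' ≤ M')
    (heig : ∀ i, m' ≤ hA.eigenvalues i ∧ hA.eigenvalues i ≤ M')
    (z : Fin n → ℝ) :
    m' ^ n / M' * ∑ i, (z i) ^ 2 ≤ z ⬝ᵥ (cof A).mulVec z ∧
      z ⬝ᵥ (cof A).mulVec z ≤ M' ^ n / m' * ∑ i, (z i) ^ 2 := by
  classical
  have hM' : 0 < M' := lt_of_lt_of_le hm' hmM
  set U : Matrix (Fin n) (Fin n) ℝ := (hA.eigenvectorUnitary : Matrix (Fin n) (Fin n) ℝ) with hUdef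
  have hU1 : U * star U = 1 := (Matrix.mem_unitaryGroup_iff).mp hA.eigenvectorUnitary.2
  have hU1' : star U * U = 1 := (Matrix.mem_unitaryGroup_iff').mp hA.eigenvectorUnitary.2
  set lam : Fin n → ℝ := hA.eigenvalues with hlam
  have hspec : A = U * diagonal lam * star U := by
    have := hA.spectral_theorem
    simpa [RCLike.ofReal_real_eq_id] using this
  -- cof A = adjugate A
  have hAT : Aᵀ = A := by
    have := hA
    rw [Matrix.IsHermitian] at this
    simpa [Matrix.conjTranspose_eq_transpose_of_trivial] using this
  have hcof : cof A = adjugate A := by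
    rw [cof, adjugate_transpose, hAT]
  -- adjugate U and adjugate (star U)
  have hadjU : adjugate U = det U • star U := by
    have h := mul_adjugate U
    calc adjugate U = (star U * U) * adjugate U := by rw [hU1', one_mul]
      _ = star U * (det U • 1) := by rw [mul_assoc, h]
      _ = det U • star U := by rw [Matrix.mul_smul, mul_one]
  have hadjsU : adjugate (star U) = det (star U) • U := by
    have h := mul_adjugate (star U)
    calc adjugate (star U) = (U * star U) * adjugate (star U) := by rw [hU1, one_mul]
      _ = U * (det (star U) • 1) := by rw [mul_assoc, h]
      _ = det (star U) • U := by rw [Matrix.mul_smul, mul_one]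
  set mu : Fin n → ℝ := fun i => ∏ j ∈ Finset.univ.erase i, lam j with hmu
  have hdet1 : det (star U) * det U = 1 := by
    rw [← det_mul, hU1', det_one]
  have hadjA : adjugate A = U * diagonal mu * star U := by
    rw [hspec, adjugate_mul_distrib, adjugate_mul_distrib, hadjU, hadjsU, adjugate_diagonal]
    simp only [Matrix.smul_mul, Matrix.mul_smul, smul_smul, hdet1, one_smul, mul_assoc, ← hmu]
    rw [mul_comm U.det, hdet1, one_smul]
  -- quadratic form
  set w : Fin n → ℝ := (star U).mulVec z with hw
  have hvec : vecMul z U = w := by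
    rw [hw]
    have : star U = Uᵀ := rfl
    rw [this, ← Matrix.vecMul_transpose, transpose_transpose]
  have hform : z ⬝ᵥ (cof A).mulVec z = ∑ i, mu i * (w i) ^ 2 := by
    rw [hcof, hadjA, ← mulVec_mulVec, ← mulVec_mulVec, dotProduct_mulVec, hvec, ← hw]
    simp only [dotProduct, mulVec_diagonal, pow_two]
    exact Finset.sum_congr rfl (fun i _ => by ring)
  have hnorm : ∑ i, (w i) ^ 2 = ∑ i, (z i) ^ 2 := by
    have : w ⬝ᵥ w = (z ᵥ* U) ⬝ᵥ (star U *ᵥ z) := by rw [hvec]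
    rw [← dotProduct_mulVec, mulVec_mulVec, hU1, one_mulVec] at this
    simpa [dotProduct, pow_two] using this
  -- bounds on mu
  have hmul : ∀ i, m' ^ (n-1) ≤ mu i ∧ mu i ≤ M' ^ (n-1) := by
    intro i
    have hcardi : (Finset.univ.erase i).card = n - 1 := by
      simp [Finset.card_erase_of_mem]
    constructor
    · calc m' ^ (n-1) = ∏ _j ∈ Finset.univ.erase i, m' := by
            rw [Finset.prod_const, hcardi]
        _ ≤ mu i := Finset.prod_le_prod (fun j _ => le_of_lt hm') (fun j _ => (heig j).1)
    · calc mu i ≤ ∏ _j ∈ Finset.univ.erase i, M' :=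
            Finset.prod_le_prod (fun j _ => le_trans (le_of_lt hm') (heig j).1)
              (fun j _ => (heig j).2)
        _ = M' ^ (n-1) := by rw [Finset.prod_const, hcardi]
  have hlow : m' ^ n / M' ≤ m' ^ (n-1) := by
    rw [div_le_iff₀ hM']
    calc m' ^ n = m' ^ (n-1) * m' := by
          rw [← pow_succ, Nat.sub_add_cancel hn]
      _ ≤ m' ^ (n-1) * M' := by
          exact mul_le_mul_of_nonneg_left hmM (le_of_lt (pow_pos hm' _))
  have hhigh : M' ^ (n-1) ≤ M' ^ n / m' := by
    rw [le_div_iff₀ hm']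
    calc M' ^ (n-1) * m' ≤ M' ^ (n-1) * M' := by
          exact mul_le_mul_of_nonneg_left hmM (le_of_lt (pow_pos hM' _))
      _ = M' ^ n := by rw [← pow_succ, Nat.sub_add_cancel hn]
  constructor
  · rw [hform, ← hnorm, Finset.mul_sum]
    apply Finset.sum_le_sum
    intro i _
    exact mul_le_mul_of_nonneg_right (le_trans hlow (hmul i).1) (sq_nonneg _)
  · rw [hform, ← hnorm, Finset.mul_sum]
    apply Finset.sum_le_sum
    intro i _
    exact mul_le_mul_of_nonneg_right (le_trans (hmul i).2 hhigh) (sq_nonneg _)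
end
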